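/- Let p = p_1 + p_2 with p_1, p_2 ≥ 1, let z*_1, …, z*_N ∈ ℝ^p and z̄* ∈ ℝ^p, and let h : ℝ^p → ℝ be a differentiable function that depends only on the first p_1 coordinates of its argument (i.e. h(θ) = h(θ') whenever θ and θ' agree in coordinates 1, …, p_1). If θ̂_c is a local minimum of the corrected entropy balancing objective G(θ) = log(Σ_{i=1}^N exp⟨θ, z*_i⟩) − ⟨θ, z̄*⟩ − h(θ) on ℝ^p, then the corrected EB weights ŵ_{c,i} = exp⟨θ̂_c, z*_i⟩ / Σ_{j=1}^N exp⟨θ̂_c, z*_j⟩ exactly balance the last p_2 coordinates: Σ_{i=1}^N ŵ_{c,i} z*_{i,j} = z̄*_j for every j with p_1 < j ≤ p. -/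

import Mathlib

open scoped RealInnerProductSpace BigOperators

set_option maxHeartbeats 1000000 in
/-- If `θ̂_c` is a local minimum of the corrected entropy balancing objective
`G(θ) = log (∑ i, exp ⟪θ, z*_i⟫) - ⟪θ, z̄*⟫ - h(θ)` where `h` is differentiable and depends
only on the first `p₁` coordinates, then the corrected EB weights exactly balance the last
`p₂` coordinates of the measurements. -/
theorem ceb_balances_error_free_coordinates
    (p1 p2 N : ℕ) (hp1 : 1 ≤ p1) (hp2 : 1 ≤ p2) (hN : 1 ≤ N)
    (zstar : Fin N → EuclideanSpace ℝ (Fin (p1 + p2)))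
    (zbarstar : EuclideanSpace ℝ (Fin (p1 + p2)))
    (h : EuclideanSpace ℝ (Fin (p1 + p2)) → ℝ)
    (hdiff : Differentiable ℝ h)
    (hdep : ∀ θ θ' : EuclideanSpace ℝ (Fin (p1 + p2)),
      (∀ j : Fin (p1 + p2), (j : ℕ) < p1 → θ j = θ' j) → h θ = h θ')
    (θc : EuclideanSpace ℝ (Fin (p1 + p2)))
    (hmin : IsLocalMin
      (fun θ : EuclideanSpace ℝ (Fin (p1 + p2)) =>
        Real.log (∑ i, Real.exp ⟪θ, zstar i⟫) - ⟪θ, zbarstar⟫ - h θ) θc)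
    (w : Fin N → ℝ)
    (hw : ∀ i, w i = Real.exp ⟪θc, zstar i⟫ / ∑ j, Real.exp ⟪θc, zstar j⟫) :
    ∀ j : Fin (p1 + p2), p1 ≤ (j : ℕ) → ∑ i, w i * zstar i j = zbarstar j := by
  intro j hj
  set e : EuclideanSpace ℝ (Fin (p1 + p2)) := EuclideanSpace.single j (1 : ℝ) with he
  set ψ : ℝ → EuclideanSpace ℝ (Fin (p1 + p2)) := fun t => θc + t • e with hψ
  have hψ0 : ψ 0 = θc := by simp [hψ]
  have hψcont : Filter.Tendsto ψ (nhds 0) (nhds θc) := by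
    have : Continuous ψ := continuous_const.add (continuous_id.smul continuous_const)
    simpa [hψ0] using this.tendsto 0
  -- local min of composed function
  have hminφ : IsLocalMin
      ((fun θ : EuclideanSpace ℝ (Fin (p1 + p2)) =>
        Real.log (∑ i, Real.exp ⟪θ, zstar i⟫) - ⟪θ, zbarstar⟫ - h θ) ∘ ψ) 0 := by
    exact IsMinFilter.comp_tendsto (hψ0.symm ▸ hmin) hψcont
  -- inner product simplification
  have hinner : ∀ (t : ℝ) (v : EuclideanSpace ℝ (Fin (p1 + p2))),
      ⟪ψ t, v⟫ = ⟪θc, v⟫ + t * v j := by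
    intro t v
    show (inner ℝ (θc + t • e) v : ℝ) = inner ℝ θc v + t * v j
    rw [inner_add_left, real_inner_smul_left, he, EuclideanSpace.inner_single_left]
    simp
  -- h along ψ is constant
  have hhconst : ∀ t : ℝ, h (ψ t) = h θc := by
    intro t
    exact hdep _ _ (by
    intro j' hj'
    have hne : j' ≠ j := by
      intro hEq; rw [hEq] at hj'; omega
    simp [hψ, he, EuclideanSpace.single_apply, hne])
  have hφeq : ((fun θ : EuclideanSpace ℝ (Fin (p1 + p2)) =>
        Real.log (∑ i, Real.exp ⟪θ, zstar i⟫) - ⟪θ, zbarstar⟫ - h θ) ∘ ψ)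
      = fun t : ℝ => Real.log (∑ i, Real.exp (⟪θc, zstar i⟫ + t * zstar i j))
          - (⟪θc, zbarstar⟫ + t * zbarstar j) - h θc := by
    funext t
    simp only [Function.comp_apply, hinner, hhconst]
  rw [hφeq] at hminφ
  -- the sum is positive
  set S : ℝ := ∑ i, Real.exp ⟪θc, zstar i⟫ with hS
  have hSpos : 0 < S := by
    have : Nonempty (Fin N) := Fin.pos_iff_nonempty.mp (by omega)
    exact Finset.sum_pos (fun i _ => Real.exp_pos _) Finset.univ_nonempty
  -- derivative at 0
  have hderivsum : HasDerivAt (fun t : ℝ => ∑ i, Real.exp (⟪θc, zstar i⟫ + t * zstar i j))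
      (∑ i, zstar i j * Real.exp ⟪θc, zstar i⟫) 0 := by
    apply HasDerivAt.fun_sum
    intro i _
    have h1 : HasDerivAt (fun t : ℝ => ⟪θc, zstar i⟫ + t * zstar i j) (zstar i j) 0 := by
      simpa using ((hasDerivAt_id (0:ℝ)).mul_const (zstar i j)).const_add ⟪θc, zstar i⟫
    simpa [mul_comm] using h1.exp
  have hderiv : HasDerivAt (fun t : ℝ => Real.log (∑ i, Real.exp (⟪θc, zstar i⟫ + t * zstar i j))
          - (⟪θc, zbarstar⟫ + t * zbarstar j) - h θc)
      ((∑ i, zstar i j * Real.exp ⟪θc, zstar i⟫) / S - zbarstar j) 0 := by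
    have hlog : HasDerivAt (fun t : ℝ =>
        Real.log (∑ i, Real.exp (⟪θc, zstar i⟫ + t * zstar i j)))
        ((∑ i, zstar i j * Real.exp ⟪θc, zstar i⟫) / S) 0 := by
      have := hderivsum.log (by simpa [hS] using ne_of_gt hSpos)
      simpa [hS] using this
    have hlin : HasDerivAt (fun t : ℝ => ⟪θc, zbarstar⟫ + t * zbarstar j) (zbarstar j) 0 := by
      simpa using ((hasDerivAt_id (0:ℝ)).mul_const (zbarstar j)).const_add ⟪θc, zbarstar⟫
    simpa using (hlog.sub hlin).sub_const (h θc)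
  have hzero := hminφ.hasDerivAt_eq_zero hderiv
  have hkey : (∑ i, zstar i j * Real.exp ⟪θc, zstar i⟫) / S = zbarstar j := by
    linarith [hzero]
  calc ∑ i, w i * zstar i j
      = ∑ i, zstar i j * Real.exp ⟪θc, zstar i⟫ / S := by
        apply Finset.sum_congr rfl
        intro i _
        rw [hw i]
        field_simp [hS]
    _ = (∑ i, zstar i j * Real.exp ⟪θc, zstar i⟫) / S := by
        rw [Finset.sum_div]
    _ = zbarstar j := hkey
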